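/- Let f_a(z) = λ z + a z² + z³ and P_c(z) = λ z (1 - (1/2)(1 + 1/c) z + z²/(3c)). For c ∈ ℂ* and a ∈ ℂ, there exists β ∈ ℂ* with β · P_c(z) = f_a(β z) for all z if and only if a² = (3λ/4)(c + 1/c + 2). -/

import Mathlib

open Complex

/-- The critically marked cubic Siegel polynomial
`P_c(z) = e^{2πiθ} z (1 - (1/2)(1 + 1/c) z + z²/(3c))`. -/
noncomputable def cubicP (θ : ℝ) (c z : ℂ) : ℂ :=
  exp (2 * Real.pi * I * θ) * z * (1 - (1/2) * (1 + 1/c) * z + z^2 / (3*c))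

/-- The cubic polynomial `f_a(z) = e^{2πiθ} z + a z² + z³`. -/
noncomputable def cubicF (θ : ℝ) (a z : ℂ) : ℂ :=
  exp (2 * Real.pi * I * θ) * z + a * z^2 + z^3

theorem linearly_conjugate_iff (θ : ℝ) (c a : ℂ) (hc : c ≠ 0) :
    (∃ β : ℂ, β ≠ 0 ∧ ∀ z : ℂ, β * cubicP θ c z = cubicF θ a (β * z)) ↔
      a^2 = 3 * exp (2 * Real.pi * I * θ) / 4 * (c + 1/c + 2) := by
  set l : ℂ := exp (2 * Real.pi * I * θ) with hl
  have hlne : l ≠ 0 := Complex.exp_ne_zero _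
  have hne3 : l / (3 * c) ≠ 0 :=
    div_ne_zero hlne (mul_ne_zero three_ne_zero hc)
  constructor
  · rintro ⟨β, hβ, h⟩
    have h1 := h 1
    have h2 := h (-1)
    simp only [cubicP, cubicF, ← hl] at h1 h2
    have hab : a * β = -(l * (1 + 1/c)) / 2 := by
      have eA : a * β * β = -(l * (1 + 1/c)) / 2 * β := by
        linear_combination (-1/2 : ℂ) * h1 + (-1/2 : ℂ) * h2
      exact mul_right_cancel₀ hβ eA
    have hb2 : β ^ 2 = l / (3 * c) := by
      have eB : β ^ 2 * β = l / (3 * c) * β := by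
        linear_combination (-1/2 : ℂ) * h1 + (1/2 : ℂ) * h2
      exact mul_right_cancel₀ hβ eB
    have key : a ^ 2 * (l / (3 * c)) = (-(l * (1 + 1/c)) / 2) ^ 2 := by
      rw [← hab, ← hb2]; ring
    have ha2 : a ^ 2 = (-(l * (1 + 1/c)) / 2) ^ 2 / (l / (3 * c)) :=
      (eq_div_iff hne3).mpr key
    rw [ha2]
    field_simp
    ring
  · intro ha
    by_cases hA : a = 0
    · have hc1 : c = -1 := by
        have h0 : (c + 1) ^ 2 = 0 := by
          field_simp [hA] at ha
          have h3l : (3 * l) * (c + 1) ^ 2 = 0 := by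
            rw [hA] at ha; linear_combination -ha
          exact (mul_eq_zero.mp h3l).resolve_left (mul_ne_zero three_ne_zero hlne)
        have h1 : c + 1 = 0 := pow_eq_zero_iff (two_ne_zero) |>.mp h0
        linear_combination h1
      obtain ⟨β, hβ2⟩ := IsAlgClosed.exists_pow_nat_eq (-l/3) (n := 2) two_pos
      refine ⟨β, ?_, ?_⟩
      · intro h0
        rw [h0] at hβ2
        apply hlne
        linear_combination 3 * hβ2
      · intro z
        simp only [cubicP, cubicF, ← hl, hc1, hA]
        linear_combination (-z^3 * β) * hβ2
    · have hc1ne : c + 1 ≠ 0 := by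
        intro h
        apply hA
        have hc' : c = -1 := by linear_combination h
        have : a ^ 2 = 0 := by rw [ha, hc']; norm_num
        exact pow_eq_zero_iff two_ne_zero |>.mp this
      set β : ℂ := -(l * (1 + 1/c)) / (2 * a) with hβ
      have hab : a * β = -(l * (1 + 1/c)) / 2 := by
        rw [hβ]; field_simp
      have ha2 : a ^ 2 ≠ 0 := pow_ne_zero _ hA
      have keyrev : a ^ 2 * (l / (3 * c)) = (-(l * (1 + 1/c)) / 2) ^ 2 := by
        rw [ha]; field_simp; ring
      have h2 : β ^ 2 = l / (3 * c) := by
        have hsq : β ^ 2 = (-(l * (1 + 1/c)) / 2) ^ 2 / a ^ 2 := by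
          rw [hβ]; field_simp
        rw [hsq, ← keyrev, mul_comm, mul_div_assoc, div_self ha2, mul_one]
      have h3 : β ^ 3 = l / (3 * c) * β := by
        rw [pow_succ, h2]
      have hnum : 1 + 1/c ≠ 0 := by
        intro h1
        apply hc1ne
        field_simp at h1
        linear_combination h1
      refine ⟨β, ?_, ?_⟩
      · exact div_ne_zero (neg_ne_zero.mpr (mul_ne_zero hlne hnum))
          (mul_ne_zero two_ne_zero hA)
      · intro z
        simp only [cubicP, cubicF, ← hl]
        linear_combination (-β * z^2) * hab + (-z^3) * h3
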